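/- (S-lemma with equality) Suppose there exist x', x'' ∈ ℝⁿ with h(x') < 0 < h(x''). Suppose furthermore that it is NOT the case that all of the following hold: A has exactly one negative eigenvalue (counted with multiplicity), B = 0, b ≠ 0, and the (n)×(n) symmetric matrix [[VᵀAV, Vᵀ(Ax₀ + a)], [(Ax₀ + a)ᵀV, f(x₀)]] is positive semidefinite, where x₀ = −(d/(2bᵀb))·b and V ∈ ℝ^{n×(n−1)} is a matrix whose columns form a basis of the null space {x ∈ ℝⁿ : bᵀx = 0}. Then the system f(x) < 0, h(x) = 0 has no solution x ∈ ℝⁿ if and only if there exists a real number μ such that f(x) + μ·h(x) ≥ 0 for all x ∈ ℝⁿ. -/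

import Mathlib

set_option maxHeartbeats 1000000
open Matrix


noncomputable def qfun {n : ℕ} (M : Matrix (Fin n) (Fin n) ℝ) (m : Fin n → ℝ) (r : ℝ)
    (x : Fin n → ℝ) : ℝ :=
  x ⬝ᵥ M *ᵥ x + 2 * (m ⬝ᵥ x) + r

section scalar

/-- negative-leading quadratic is eventually negative -/
lemma negquad {m : ℝ} (hm : m < 0) (β γ : ℝ) :
    ∃ T : ℝ, 0 < T ∧ ∀ t, T ≤ t → m * t ^ 2 + β * t + γ < 0 := by
  refine ⟨max 1 ((|β| + |γ| + 1) / (-m)), lt_of_lt_of_le one_pos (le_max_left _ _), fun t ht => ?_⟩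
  have ht1 : (1 : ℝ) ≤ t := le_trans (le_max_left _ _) ht
  have ht2 : (|β| + |γ| + 1) / (-m) ≤ t := le_trans (le_max_right _ _) ht
  have hmt : |β| + |γ| + 1 ≤ (-m) * t := by
    rw [div_le_iff₀ (by linarith)] at ht2; linarith [ht2]
  have hβ : β * t ≤ |β| * t := by
    have := le_abs_self β; nlinarith
  have hγ : γ ≤ |γ| * t := by
    have h1 := le_abs_self γ; nlinarith [abs_nonneg γ]
  nlinarith [sq_nonneg t, ht1]

lemma negquad' {m : ℝ} (hm : m < 0) (β γ : ℝ) :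
    ∃ T : ℝ, 0 < T ∧ ∀ t, T ≤ |t| → m * t ^ 2 + β * t + γ < 0 := by
  obtain ⟨T, hT, h⟩ := negquad hm |β| γ
  refine ⟨T, hT, fun t ht => ?_⟩
  have := h |t| ht
  have hb : β * t ≤ |β| * |t| := by
    calc β * t ≤ |β * t| := le_abs_self _
    _ = |β| * |t| := abs_mul _ _
  nlinarith [sq_abs t]

/-- a nonneg quadratic has nonneg leading coefficient -/
lemma quad_nonneg_leading {α β γ : ℝ} (h : ∀ s : ℝ, 0 ≤ α * s ^ 2 + β * s + γ) : 0 ≤ α := by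
  by_contra hc
  push_neg at hc
  obtain ⟨T, hT, hq⟩ := negquad hc β γ
  exact absurd (h T) (not_le.mpr (hq T le_rfl))

/-- a bounded-below linear function has zero slope -/
lemma lin_nonneg_slope {β γ : ℝ} (h : ∀ s : ℝ, 0 ≤ β * s + γ) : β = 0 := by
  by_contra hc
  rcases lt_or_gt_of_ne hc with hneg | hpos
  · have := h ((-γ - 1) / β)
    rw [mul_div_cancel₀ _ (ne_of_lt hneg)] at this; linarith
  · have := h ((-γ - 1) / β)
    rw [mul_div_cancel₀ _ (ne_of_gt hpos)] at this; linarith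

/-- eventually-positive linear function has nonneg slope -/
lemma lin_eventually_pos {β γ T : ℝ} (h : ∀ t, T ≤ t → 0 < β * t + γ) : 0 ≤ β := by
  by_contra hc
  push_neg at hc
  have := h (max T ((-γ - 1) / β)) (le_max_left _ _)
  have h2 : (-γ - 1) / β ≤ max T ((-γ - 1) / β) := le_max_right _ _
  rw [div_le_iff_of_neg hc] at h2
  nlinarith

/-- concavity: negative-leading quadratic negative at 0, nonneg at a positive point,
is negative at nonpositive points -/
lemma concave_neg {α β γ t₀ s : ℝ} (hα : α < 0) (h0 : γ < 0) (ht₀ : 0 < t₀)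
    (hp : 0 ≤ α * t₀ ^ 2 + β * t₀ + γ) (hs : s ≤ 0) : α * s ^ 2 + β * s + γ < 0 := by
  nlinarith [mul_nonneg (mul_nonneg (neg_nonneg.mpr hα.le) (neg_nonneg.mpr hs)) ht₀.le,
    mul_pos (sub_pos.mpr (lt_of_le_of_lt hs ht₀)) (neg_pos.mpr h0)]

lemma quartic_neg {a4 : ℝ} (h4 : a4 < 0) (a3 a2 a1 a0 : ℝ) :
    ∃ r : ℝ, a4 * r ^ 4 + a3 * r ^ 3 + a2 * r ^ 2 + a1 * r + a0 < 0 := by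
  set S := |a3| + |a2| + |a1| + |a0|
  have hS : 0 ≤ S := by positivity
  refine ⟨max 1 ((S + 1) / (-a4)), ?_⟩
  set r := max 1 ((S + 1) / (-a4)) with hr
  have hr1 : (1:ℝ) ≤ r := le_max_left _ _
  have hr2 : (S + 1) / (-a4) ≤ r := le_max_right _ _
  have h4r : S + 1 ≤ (-a4) * r := by rw [div_le_iff₀ (by linarith)] at hr2; linarith
  have hr0 : 0 < r := lt_of_lt_of_le one_pos hr1
  have hr3 : 0 < r ^ 3 := by positivity
  have e3 : a3 * r ^ 3 ≤ |a3| * r ^ 3 := by nlinarith [le_abs_self a3]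
  have e2 : a2 * r ^ 2 ≤ |a2| * r ^ 3 := by
    nlinarith [le_abs_self a2, mul_nonneg (abs_nonneg a2) (mul_nonneg (sq_nonneg r) (by linarith : (0:ℝ) ≤ r - 1)), sq_nonneg r]
  have e1 : a1 * r ≤ |a1| * r ^ 3 := by
    nlinarith [le_abs_self a1, mul_nonneg (abs_nonneg a1) (mul_nonneg hr0.le (by nlinarith [sq_nonneg r] : (0:ℝ) ≤ r ^ 2 - 1))]
  have e0 : a0 ≤ |a0| * r ^ 3 := by
    nlinarith [le_abs_self a0, mul_nonneg (abs_nonneg a0) (by nlinarith : (0:ℝ) ≤ r ^ 3 - 1)]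
  have key : a4 * r ^ 4 + S * r ^ 3 < 0 := by
    have : a4 * r ^ 4 = (a4 * r) * r ^ 3 := by ring
    rw [this]
    have : a4 * r + S < 0 := by nlinarith
    nlinarith
  simp only [S] at key
  nlinarith
end scalar



section matrixhelp
variable {n k : ℕ}

lemma dot_symm {M : Matrix (Fin n) (Fin n) ℝ} (hM : Mᵀ = M) (x y : Fin n → ℝ) :
    x ⬝ᵥ M *ᵥ y = y ⬝ᵥ M *ᵥ x := by
  rw [dotProduct_mulVec, ← mulVec_transpose, hM, dotProduct_comm]

lemma trans_dot (V : Matrix (Fin n) (Fin k) ℝ) (z : Fin n → ℝ) (y : Fin k → ℝ) :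
    (Vᵀ *ᵥ z) ⬝ᵥ y = z ⬝ᵥ (V *ᵥ y) := by
  rw [mulVec_transpose, dotProduct_mulVec, dotProduct_comm]

lemma qfun_expand {M : Matrix (Fin n) (Fin n) ℝ} (hM : Mᵀ = M) (m : Fin n → ℝ) (e : ℝ)
    (p v : Fin n → ℝ) (t : ℝ) :
    qfun M m e (p + t • v) =
      qfun M m e p + 2 * t * (v ⬝ᵥ M *ᵥ p + m ⬝ᵥ v) + t ^ 2 * (v ⬝ᵥ M *ᵥ v) := by
  have h1 := dot_symm hM p v
  simp only [qfun, mulVec_add, mulVec_smul, dotProduct_add, add_dotProduct,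
    dotProduct_smul, smul_dotProduct, smul_eq_mul]
  rw [h1]; ring

lemma qfun_combo (A B : Matrix (Fin n) (Fin n) ℝ) (a b : Fin n → ℝ) (c d μ : ℝ)
    (x : Fin n → ℝ) :
    qfun A a c x + μ * qfun B b d x = qfun (A + μ • B) (a + μ • b) (c + μ * d) x := by
  simp only [qfun, add_mulVec, smul_mulVec, dotProduct_add, add_dotProduct,
    dotProduct_smul, smul_dotProduct, smul_eq_mul]
  ring

lemma qfun_cont {M : Matrix (Fin n) (Fin n) ℝ} (hM : Mᵀ = M) (m : Fin n → ℝ) (e : ℝ)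
    (p v : Fin n → ℝ) : Continuous fun s : ℝ => qfun M m e (p + s • v) := by
  have : (fun s : ℝ => qfun M m e (p + s • v)) =
      fun s : ℝ => qfun M m e p + 2 * s * (v ⬝ᵥ M *ᵥ p + m ⬝ᵥ v) + s ^ 2 * (v ⬝ᵥ M *ᵥ v) := by
    funext s; exact qfun_expand hM m e p v s
  rw [this]; continuity

/-- polarization: a symmetric matrix with vanishing quadratic form is zero -/
lemma exists_quad_ne {B : Matrix (Fin n) (Fin n) ℝ} (hBs : Bᵀ = B) (hB : B ≠ 0) :
    ∃ u : Fin n → ℝ, u ⬝ᵥ B *ᵥ u ≠ 0 := by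
  by_contra hc
  push_neg at hc
  apply hB
  have key : ∀ u w : Fin n → ℝ, u ⬝ᵥ B *ᵥ w = 0 := by
    intro u w
    have h1 := hc (u + w)
    have h2 := hc u
    have h3 := hc w
    have h4 := dot_symm hBs u w
    simp only [mulVec_add, dotProduct_add, add_dotProduct] at h1
    linarith
  ext i j
  have := key (Pi.single i 1) (Pi.single j 1)
  simpa [mulVec_single, dotProduct_single, Pi.single_apply] using this

lemma seg_prop {B : Matrix (Fin n) (Fin n) ℝ} (hBs : Bᵀ = B) {b : Fin n → ℝ} {d : ℝ}
    {g : (Fin n → ℝ) → ℝ} (H : ∀ z, qfun B b d z = 0 → 0 ≤ g z)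
    (p w : Fin n → ℝ) (hg : ∀ s ∈ Set.Icc (0:ℝ) 1, g (p + s • w) < 0)
    (h0 : 0 < qfun B b d p) : 0 < qfun B b d (p + w) := by
  by_contra hc
  push_neg at hc
  set φ : ℝ → ℝ := fun s => qfun B b d (p + s • w) with hφ
  have hcont : ContinuousOn φ (Set.Icc (0:ℝ) 1) := (qfun_cont hBs b d p w).continuousOn
  have h01 : (0:ℝ) ≤ 1 := zero_le_one
  have himg := intermediate_value_Icc' h01 hcont
  have h0' : φ 0 = qfun B b d p := by simp [hφ]
  have h1' : φ 1 = qfun B b d (p + w) := by simp [hφ]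
  have : (0:ℝ) ∈ Set.Icc (φ 1) (φ 0) := by rw [h0', h1']; exact ⟨hc, h0.le⟩
  obtain ⟨s, hs, hseq⟩ := himg this
  exact absurd (H _ hseq) (not_le.mpr (hg s hs))

lemma seg_prop_neg {B : Matrix (Fin n) (Fin n) ℝ} (hBs : Bᵀ = B) {b : Fin n → ℝ} {d : ℝ}
    {g : (Fin n → ℝ) → ℝ} (H : ∀ z, qfun B b d z = 0 → 0 ≤ g z)
    (p w : Fin n → ℝ) (hg : ∀ s ∈ Set.Icc (0:ℝ) 1, g (p + s • w) < 0)
    (h0 : qfun B b d p < 0) : qfun B b d (p + w) < 0 := by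
  by_contra hc
  push_neg at hc
  set φ : ℝ → ℝ := fun s => qfun B b d (p + s • w) with hφ
  have hcont : ContinuousOn φ (Set.Icc (0:ℝ) 1) := (qfun_cont hBs b d p w).continuousOn
  have himg := intermediate_value_Icc (zero_le_one (α := ℝ)) hcont
  have : (0:ℝ) ∈ Set.Icc (φ 0) (φ 1) := by
    constructor <;> simp [hφ] <;> [exact h0.le; exact hc]
  obtain ⟨s, hs, hseq⟩ := himg this
  exact absurd (H _ hseq) (not_le.mpr (hg s hs))
end matrixhelp

section mainlemma
variable {n : ℕ}

lemma qfun_smul {M : Matrix (Fin n) (Fin n) ℝ} (hM : Mᵀ = M) (m : Fin n → ℝ) (e0 : ℝ)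
    (u : Fin n → ℝ) (r : ℝ) :
    qfun M m e0 (r • u) = r ^ 2 * (u ⬝ᵥ M *ᵥ u) + 2 * r * (m ⬝ᵥ u) + e0 := by
  have h := qfun_expand hM m e0 0 u r
  have h0 : qfun M m e0 0 = e0 := by simp [qfun]
  have h00 : u ⬝ᵥ M *ᵥ (0 : Fin n → ℝ) = 0 := by simp
  rw [zero_add] at h
  rw [h, h0, h00]; ring

lemma main_engine {M B : Matrix (Fin n) (Fin n) ℝ} (hM : Mᵀ = M) (hBs : Bᵀ = B)
    (hB : B ≠ 0) (mv b : Fin n → ℝ) (e0 d : ℝ) (x y : Fin n → ℝ)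
    (H : ∀ z, qfun B b d z = 0 → 0 ≤ qfun M mv e0 z)
    (hgx : qfun M mv e0 x < 0) (hgy : qfun M mv e0 y < 0)
    (hhx : 0 < qfun B b d x) (hhy : qfun B b d y < 0) : False := by
  classical
  by_cases hpsd : ∀ v : Fin n → ℝ, 0 ≤ v ⬝ᵥ M *ᵥ v
  · -- convex case : straight segment from x to y
    have hseg : ∀ s ∈ Set.Icc (0:ℝ) 1, qfun M mv e0 (x + s • (y - x)) < 0 := by
      intro s hs
      obtain ⟨hs0, hs1⟩ := hs
      have hq := hpsd (y - x)
      have hx1 := qfun_expand hM mv e0 x (y - x) 1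
      rw [show x + (1:ℝ) • (y - x) = y by module] at hx1
      have hid : qfun M mv e0 (x + s • (y - x)) = (1 - s) * qfun M mv e0 x
          + s * qfun M mv e0 y + (s ^ 2 - s) * ((y - x) ⬝ᵥ M *ᵥ (y - x)) := by
        rw [qfun_expand hM mv e0 x (y - x) s, hx1]; ring
      have h3 : (s ^ 2 - s) * ((y - x) ⬝ᵥ M *ᵥ (y - x)) ≤ 0 :=
        mul_nonpos_of_nonpos_of_nonneg (by nlinarith) hq
      have h4 : (1 - s) * qfun M mv e0 x + s * qfun M mv e0 y < 0 := by
        rcases le_total (qfun M mv e0 x) (qfun M mv e0 y) with h | h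
        · nlinarith
        · nlinarith
      rw [hid]; linarith
    have := seg_prop hBs H x (y - x) hseg hhx
    rw [show x + (y - x) = y by module] at this
    linarith
  · push_neg at hpsd
    obtain ⟨v₀, hv₀⟩ := hpsd
    have ray : ∀ z : Fin n → ℝ, qfun M mv e0 z < 0 → ∀ v : Fin n → ℝ, v ⬝ᵥ M *ᵥ v < 0 →
        (∀ t : ℝ, 0 ≤ t → qfun M mv e0 (z + t • v) < 0) ∨
        (∀ t : ℝ, 0 ≤ t → qfun M mv e0 (z + t • (-v)) < 0) := by
      intro z hz v hv
      by_cases h1 : ∀ t : ℝ, 0 ≤ t → qfun M mv e0 (z + t • v) < 0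
      · exact Or.inl h1
      · push_neg at h1
        obtain ⟨t₀, ht₀, hgt₀⟩ := h1
        have ht₀pos : 0 < t₀ := by
          rcases eq_or_lt_of_le ht₀ with h | h
          · exfalso; rw [← h] at hgt₀; simp at hgt₀; linarith
          · exact h
        refine Or.inr fun t ht => ?_
        have hrw : z + t • (-v) = z + (-t) • v := by module
        rw [hrw, qfun_expand hM mv e0 z v (-t)]
        have h2 := qfun_expand hM mv e0 z v t₀
        rw [h2] at hgt₀
        have := concave_neg (α := v ⬝ᵥ M *ᵥ v) (β := 2 * (v ⬝ᵥ M *ᵥ z + mv ⬝ᵥ v))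
          (γ := qfun M mv e0 z) (t₀ := t₀) (s := -t) hv hz ht₀pos (by linarith) (by linarith)
        linarith [this]
    obtain ⟨v, hv, hxray⟩ : ∃ v : Fin n → ℝ, v ⬝ᵥ M *ᵥ v < 0 ∧
        ∀ t : ℝ, 0 ≤ t → qfun M mv e0 (x + t • v) < 0 := by
      rcases ray x hgx v₀ hv₀ with h | h
      · exact ⟨v₀, hv₀, h⟩
      · refine ⟨-v₀, ?_, h⟩
        simpa [Matrix.mulVec_neg, dotProduct_neg, neg_dotProduct] using hv₀
    have conn : ∀ p q : Fin n → ℝ, ∃ T, 0 < T ∧ ∀ t : ℝ, T ≤ |t| →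
        ∀ s ∈ Set.Icc (0:ℝ) 1, qfun M mv e0 (p + s • (q - p) + t • v) < 0 := by
      intro p q
      set w := q - p with hw
      set c1 := v ⬝ᵥ M *ᵥ p + mv ⬝ᵥ v with hc1
      set c2 := v ⬝ᵥ M *ᵥ w with hc2
      set ξ := w ⬝ᵥ M *ᵥ p + mv ⬝ᵥ w with hξ
      set ρ := w ⬝ᵥ M *ᵥ w with hρ
      set K₁ := |c1| + |c2| with hK₁
      set K₂ := |qfun M mv e0 p| + 2 * |ξ| + |ρ| with hK₂
      obtain ⟨T, hT, hq⟩ := negquad hv (2 * K₁) K₂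
      refine ⟨T, hT, fun t ht s hs => ?_⟩
      obtain ⟨hs0, hs1⟩ := hs
      have e1 : qfun M mv e0 (p + s • w + t • v) =
          qfun M mv e0 (p + s • w) + 2 * t * (v ⬝ᵥ M *ᵥ (p + s • w) + mv ⬝ᵥ v)
            + t ^ 2 * (v ⬝ᵥ M *ᵥ v) := qfun_expand hM mv e0 (p + s • w) v t
      have e2 : qfun M mv e0 (p + s • w) = qfun M mv e0 p + 2 * s * ξ + s ^ 2 * ρ :=
        qfun_expand hM mv e0 p w s
      have e3 : v ⬝ᵥ M *ᵥ (p + s • w) + mv ⬝ᵥ v = c1 + s * c2 := by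
        simp only [mulVec_add, dotProduct_add, mulVec_smul, dotProduct_smul, smul_eq_mul,
          hc1, hc2]
        ring
      have hs2 : s ^ 2 ≤ 1 := by nlinarith
      have hb1 : qfun M mv e0 (p + s • w) ≤ K₂ := by
        rw [e2, hK₂]
        have h5 := le_abs_self (qfun M mv e0 p)
        have h1 : 2 * s * ξ ≤ 2 * |ξ| := by
          have := mul_le_mul_of_nonneg_left (le_abs_self ξ) hs0
          have := mul_le_mul_of_nonneg_right hs1 (abs_nonneg ξ)
          nlinarith
        have h2 : s ^ 2 * ρ ≤ |ρ| := by
          have := mul_le_mul_of_nonneg_left (le_abs_self ρ) (sq_nonneg s)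
          have := mul_le_mul_of_nonneg_right hs2 (abs_nonneg ρ)
          nlinarith
        linarith
      have hb2 : 2 * t * (c1 + s * c2) ≤ 2 * |t| * K₁ := by
        have habs : |c1 + s * c2| ≤ K₁ := by
          calc |c1 + s * c2| ≤ |c1| + |s * c2| := abs_add_le _ _
          _ = |c1| + |s| * |c2| := by rw [abs_mul]
          _ ≤ |c1| + 1 * |c2| := by
              have hsabs : |s| ≤ 1 := by rw [abs_le]; constructor <;> linarith
              nlinarith [abs_nonneg c2]
          _ = K₁ := by rw [hK₁]; ring
        calc 2 * t * (c1 + s * c2) ≤ |2 * t * (c1 + s * c2)| := le_abs_self _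
        _ = 2 * |t| * |c1 + s * c2| := by
            rw [abs_mul, abs_mul, abs_two]
        _ ≤ 2 * |t| * K₁ := by
            have h2t : (0:ℝ) ≤ 2 * |t| := by positivity
            exact mul_le_mul_of_nonneg_left habs h2t
      have hqt := hq |t| ht
      rw [sq_abs] at hqt
      rw [e1, e3]
      linarith [hb1, hb2, hqt]
    by_cases hyray : ∀ t : ℝ, 0 ≤ t → qfun M mv e0 (y + t • v) < 0
    · obtain ⟨T₀, hT₀, hconn⟩ := conn x y
      set T := max T₀ 1 with hTdef
      have hT1 : (1:ℝ) ≤ T := le_max_right _ _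
      have hTpos : 0 < T := lt_of_lt_of_le one_pos hT1
      have hTabs : T₀ ≤ |T| := by rw [abs_of_pos hTpos]; exact le_max_left _ _
      have step1 : 0 < qfun B b d (x + T • v) := by
        refine seg_prop hBs H x (T • v) (fun s hs => ?_) hhx
        rw [show x + s • (T • v) = x + (s * T) • v by module]
        exact hxray (s * T) (mul_nonneg hs.1 hTpos.le)
      have step2 : 0 < qfun B b d (y + T • v) := by
        have := seg_prop hBs H (x + T • v) (y - x) (fun s hs => by
          rw [show x + T • v + s • (y - x) = x + s • (y - x) + T • v by module]
          exact hconn T hTabs s hs) step1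
        rwa [show x + T • v + (y - x) = y + T • v by module] at this
      have step3 : 0 < qfun B b d y := by
        have := seg_prop hBs H (y + T • v) (-(T • v)) (fun s hs => by
          rw [show y + T • v + s • (-(T • v)) = y + ((1 - s) * T) • v by module]
          exact hyray ((1 - s) * T) (mul_nonneg (by linarith [hs.2]) hTpos.le)) step2
        rwa [show y + T • v + -(T • v) = y by module] at this
      linarith
    · push_neg at hyray
      obtain ⟨t₀, ht₀, hgt₀⟩ := hyray
      have ht₀pos : 0 < t₀ := by
        rcases eq_or_lt_of_le ht₀ with h | h
        · exfalso; rw [← h] at hgt₀; simp at hgt₀; linarith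
        · exact h
      have hyneg : ∀ t : ℝ, t ≤ 0 → qfun M mv e0 (y + t • v) < 0 := by
        intro t ht
        rw [qfun_expand hM mv e0 y v t]
        have h2 := qfun_expand hM mv e0 y v t₀
        rw [h2] at hgt₀
        have := concave_neg (α := v ⬝ᵥ M *ᵥ v) (β := 2 * (v ⬝ᵥ M *ᵥ y + mv ⬝ᵥ v))
          (γ := qfun M mv e0 y) (t₀ := t₀) (s := t) hv hgy ht₀pos
          (by linarith) ht
        linarith [this]
      have hplus : ∀ p : Fin n → ℝ, ∃ T, 0 < T ∧ ∀ t : ℝ, T ≤ t →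
          0 < qfun B b d (p + t • v) := by
        intro p
        obtain ⟨T₀, hT₀, hconn⟩ := conn x p
        refine ⟨max T₀ 1, lt_of_lt_of_le one_pos (le_max_right _ _), fun t ht => ?_⟩
        have htpos : 0 < t := lt_of_lt_of_le (lt_of_lt_of_le one_pos (le_max_right _ _)) ht
        have htabs : T₀ ≤ |t| := by
          rw [abs_of_pos htpos]; exact le_trans (le_max_left _ _) ht
        have step1 : 0 < qfun B b d (x + t • v) := by
          refine seg_prop hBs H x (t • v) (fun s hs => ?_) hhx
          rw [show x + s • (t • v) = x + (s * t) • v by module]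
          exact hxray (s * t) (mul_nonneg hs.1 htpos.le)
        have step2 := seg_prop hBs H (x + t • v) (p - x) (fun s hs => by
          rw [show x + t • v + s • (p - x) = x + s • (p - x) + t • v by module]
          exact hconn t htabs s hs) step1
        rwa [show x + t • v + (p - x) = p + t • v by module] at step2
      have hminus : ∀ p : Fin n → ℝ, ∃ T, 0 < T ∧ ∀ t : ℝ, t ≤ -T →
          qfun B b d (p + t • v) < 0 := by
        intro p
        obtain ⟨T₀, hT₀, hconn⟩ := conn y p
        refine ⟨max T₀ 1, lt_of_lt_of_le one_pos (le_max_right _ _), fun t ht => ?_⟩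
        have htneg : t < 0 := by
          have : (0:ℝ) < max T₀ 1 := lt_of_lt_of_le one_pos (le_max_right _ _)
          linarith
        have htabs : T₀ ≤ |t| := by
          rw [abs_of_neg htneg]
          have := le_max_left T₀ 1
          linarith
        have step1 : qfun B b d (y + t • v) < 0 := by
          refine seg_prop_neg hBs H y (t • v) (fun s hs => ?_) hhy
          rw [show y + s • (t • v) = y + (s * t) • v by module]
          exact hyneg (s * t) (mul_nonpos_of_nonneg_of_nonpos hs.1 htneg.le)
        have step2 := seg_prop_neg hBs H (y + t • v) (p - y) (fun s hs => by
          rw [show y + t • v + s • (p - y) = y + s • (p - y) + t • v by module]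
          exact hconn t htabs s hs) step1
        rwa [show y + t • v + (p - y) = p + t • v by module] at step2
      have hcB : v ⬝ᵥ B *ᵥ v = 0 := by
        obtain ⟨Tp, hTp, hp⟩ := hplus x
        obtain ⟨Tm, hTm, hm⟩ := hminus x
        rcases lt_trichotomy (v ⬝ᵥ B *ᵥ v) 0 with hlt | h0 | hgt
        · exfalso
          obtain ⟨T', hT', hq⟩ := negquad hlt (2 * (v ⬝ᵥ B *ᵥ x + b ⬝ᵥ v)) (qfun B b d x)
          have ht := hp (max Tp T') (le_max_left _ _)
          rw [qfun_expand hBs b d x v (max Tp T')] at ht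
          have := hq (max Tp T') (le_max_right _ _)
          linarith
        · exact h0
        · exfalso
          have hneg : -(v ⬝ᵥ B *ᵥ v) < 0 := by linarith
          obtain ⟨T', hT', hq⟩ := negquad hneg (2 * (v ⬝ᵥ B *ᵥ x + b ⬝ᵥ v))
            (-(qfun B b d x))
          have ht := hm (-(max Tm T')) (by
            have := le_max_left Tm T'; linarith)
          rw [qfun_expand hBs b d x v (-(max Tm T'))] at ht
          have := hq (max Tm T') (le_max_right _ _)
          nlinarith
      have hσ : ∀ p : Fin n → ℝ, 0 < v ⬝ᵥ B *ᵥ p + b ⬝ᵥ v := by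
        intro p
        obtain ⟨Tp, hTp, hp⟩ := hplus p
        obtain ⟨Tm, hTm, hm⟩ := hminus p
        have hlin : ∀ t : ℝ, Tp ≤ t → 0 < (2 * (v ⬝ᵥ B *ᵥ p + b ⬝ᵥ v)) * t + qfun B b d p := by
          intro t ht
          have h6 := hp t ht
          rw [qfun_expand hBs b d p v t, hcB] at h6
          linarith
        have h1 : 0 ≤ 2 * (v ⬝ᵥ B *ᵥ p + b ⬝ᵥ v) := lin_eventually_pos hlin
        rcases eq_or_lt_of_le h1 with h2 | h2
        · exfalso
          have hσ0 : v ⬝ᵥ B *ᵥ p + b ⬝ᵥ v = 0 := by linarith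
          have hp1 := hp Tp le_rfl
          have hm1' := hm (-Tm) le_rfl
          rw [qfun_expand hBs b d p v Tp, hcB, hσ0] at hp1
          rw [qfun_expand hBs b d p v (-Tm), hcB, hσ0] at hm1'
          simp at hp1 hm1'
          linarith
        · linarith
      have hBv : ∀ w : Fin n → ℝ, v ⬝ᵥ B *ᵥ w = 0 := by
        intro w
        have hlin : ∀ s : ℝ, 0 ≤ (v ⬝ᵥ B *ᵥ w) * s + b ⬝ᵥ v := by
          intro s
          have h7 := hσ (s • w)
          rw [mulVec_smul, dotProduct_smul, smul_eq_mul] at h7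
          linarith
        exact lin_nonneg_slope hlin
      have hs₀ : 0 < b ⬝ᵥ v := by
        have h8 := hσ 0
        rwa [mulVec_zero, dotProduct_zero, zero_add] at h8
      obtain ⟨u, hu⟩ := exists_quad_ne hBs hB
      set s₀ := b ⬝ᵥ v with hs₀def
      set cb2 := u ⬝ᵥ B *ᵥ u with hcb2
      set cb1 := b ⬝ᵥ u with hcb1
      set g2 := u ⬝ᵥ M *ᵥ u with hg2
      set g1 := mv ⬝ᵥ u with hg1
      set f1 := v ⬝ᵥ M *ᵥ u with hf1
      set f0 := mv ⬝ᵥ v with hf0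
      set a4 := (v ⬝ᵥ M *ᵥ v) * cb2 ^ 2 with ha4
      set a3 := 4 * (v ⬝ᵥ M *ᵥ v) * cb2 * cb1 - 4 * s₀ * cb2 * f1 with ha3
      set a2 := (v ⬝ᵥ M *ᵥ v) * (4 * cb1 ^ 2 + 2 * cb2 * d) - 4 * s₀ * (cb2 * f0 + 2 * cb1 * f1)
        + 4 * s₀ ^ 2 * g2 with ha2
      set a1 := 4 * (v ⬝ᵥ M *ᵥ v) * cb1 * d - 4 * s₀ * (2 * cb1 * f0 + d * f1) + 8 * s₀ ^ 2 * g1 with ha1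
      set a0 := (v ⬝ᵥ M *ᵥ v) * d ^ 2 - 4 * s₀ * d * f0 + 4 * s₀ ^ 2 * e0 with ha0
      have ha4neg : a4 < 0 := by
        have h9 : 0 < cb2 ^ 2 := lt_of_le_of_ne (sq_nonneg _) (Ne.symm (pow_ne_zero 2 hu))
        exact mul_neg_of_neg_of_pos hv h9
      obtain ⟨r, hr⟩ := quartic_neg ha4neg a3 a2 a1 a0
      set tr := -(cb2 * r ^ 2 + 2 * cb1 * r + d) / (2 * s₀) with htr
      have hs₀' : s₀ ≠ 0 := ne_of_gt hs₀
      have hhru : qfun B b d (r • u) = cb2 * r ^ 2 + 2 * cb1 * r + d := by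
        rw [qfun_smul hBs b d u r]; ring
      have hhz : qfun B b d (r • u + tr • v) = 0 := by
        have htr2 : 2 * tr * s₀ = -(cb2 * r ^ 2 + 2 * cb1 * r + d) := by
          rw [htr]; field_simp
        rw [qfun_expand hBs b d (r • u) v tr, hcB, hBv (r • u), hhru, zero_add, ← hs₀def]
        linarith [htr2]
      have hgru : qfun M mv e0 (r • u) = g2 * r ^ 2 + 2 * g1 * r + e0 := by
        rw [qfun_smul hM mv e0 u r]; ring
      have hgz : qfun M mv e0 (r • u + tr • v) =
          (g2 * r ^ 2 + 2 * g1 * r + e0) + 2 * tr * (f1 * r + f0) + tr ^ 2 * (v ⬝ᵥ M *ᵥ v) := by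
        rw [qfun_expand hM mv e0 (r • u) v tr, hgru, mulVec_smul, dotProduct_smul,
          smul_eq_mul, ← hf1, ← hf0]
        ring
      have hkey : 4 * s₀ ^ 2 * qfun M mv e0 (r • u + tr • v) =
          a4 * r ^ 4 + a3 * r ^ 3 + a2 * r ^ 2 + a1 * r + a0 := by
        rw [hgz, htr, ha4, ha3, ha2, ha1, ha0]
        field_simp
        ring
      have hgzneg : qfun M mv e0 (r • u + tr • v) < 0 := by
        by_contra hc
        push_neg at hc
        have hs₀2 : (0:ℝ) < 4 * s₀ ^ 2 := by positivity
        nlinarith [mul_nonneg hs₀2.le hc]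
      exact absurd (H _ hhz) (not_le.mpr hgzneg)
end mainlemma
section bzero
open scoped RealInnerProductSpace
variable {n k : ℕ}

lemma euc_inner {k : ℕ} (u v : EuclideanSpace ℝ (Fin k)) : ⟪u, v⟫ = u ⬝ᵥ v := by
  simp [PiLp.inner_apply, RCLike.inner_apply, dotProduct, mul_comm]

lemma dot_sum_elim {k : ℕ} (Y : Fin k ⊕ Fin 1 → ℝ) (u : Fin k → ℝ) (w : Fin 1 → ℝ) :
    Y ⬝ᵥ Sum.elim u w = (Y ∘ Sum.inl) ⬝ᵥ u + (Y ∘ Sum.inr) ⬝ᵥ w := by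
  have h : Y ⬝ᵥ Sum.elim u w = Sum.elim (Y ∘ Sum.inl) (Y ∘ Sum.inr) ⬝ᵥ Sum.elim u w := by
    congr 1; funext z; cases z <;> rfl
  rw [h, sumElim_dotProduct_sumElim]

lemma psd_quad {A : Matrix (Fin n) (Fin n) ℝ} (hA : A.PosSemidef) (x : Fin n → ℝ) :
    0 ≤ x ⬝ᵥ A *ᵥ x := by
  have := hA.dotProduct_mulVec_nonneg x
  rwa [show star x = x from funext fun i => star_trivial _] at this

lemma psd_zero {A : Matrix (Fin n) (Fin n) ℝ} (hA : A.PosSemidef) (x : Fin n → ℝ)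
    (h : x ⬝ᵥ A *ᵥ x = 0) : A *ᵥ x = 0 := by
  rw [← hA.dotProduct_mulVec_zero_iff x]
  rwa [show star x = x from funext fun i => star_trivial _]

/-- solvability of `P y = l` for `P` PSD when `l` kills the kernel -/
lemma range_solve {P : Matrix (Fin k) (Fin k) ℝ} (hP : P.PosSemidef) (l : Fin k → ℝ)
    (hl : ∀ u, P *ᵥ u = 0 → l ⬝ᵥ u = 0) : ∃ y, P *ᵥ y = l := by
  classical
  let T : EuclideanSpace ℝ (Fin k) →ₗ[ℝ] EuclideanSpace ℝ (Fin k) :=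
    { toFun := fun z => WithLp.toLp 2 (P *ᵥ z)
      map_add' := fun u v => by simp [Matrix.mulVec_add]
      map_smul' := fun s u => by simp [Matrix.mulVec_smul] }
  let R : Submodule ℝ (EuclideanSpace ℝ (Fin k)) := LinearMap.range T
  let lE : EuclideanSpace ℝ (Fin k) := WithLp.toLp 2 l
  let w : EuclideanSpace ℝ (Fin k) := lE - (Submodule.orthogonalProjectionOnto R lE : EuclideanSpace ℝ (Fin k))
  have hwR : w ∈ Rᗮ := R.sub_starProjection_mem_orthogonal lE
  have hinner : ⟪T w, w⟫ = 0 := hwR (T w) (LinearMap.mem_range_self T w)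
  have hTw : T w = P *ᵥ w := rfl
  have hdot : w ⬝ᵥ P *ᵥ w = 0 := by
    rw [euc_inner, hTw] at hinner
    rwa [dotProduct_comm] at hinner
  have hPw : P *ᵥ w = 0 := psd_zero hP _ hdot
  have hlw : l ⬝ᵥ w = 0 := hl _ hPw
  have hwz : w = 0 := by
    have h2 : ⟪lE, w⟫ = 0 := by rw [euc_inner]; exact hlw
    have h3 : ⟪(Submodule.orthogonalProjectionOnto R lE : EuclideanSpace ℝ (Fin k)), w⟫ = 0 :=
      hwR _ (Submodule.orthogonalProjectionOnto R lE).2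
    have h4 : ⟪w, w⟫ = 0 := by
      have h5 : ⟪w, w⟫ = ⟪lE, w⟫ - ⟪(Submodule.orthogonalProjectionOnto R lE : EuclideanSpace ℝ (Fin k)), w⟫ := by
        rw [← inner_sub_left]
      rw [h5, h2, h3]; ring
    exact inner_self_eq_zero.mp h4
  have hlR : lE ∈ R := by
    have h6 : lE = (Submodule.orthogonalProjectionOnto R lE : EuclideanSpace ℝ (Fin k)) := by
      have := sub_eq_zero.mp hwz
      exact this
    rw [h6]; exact Submodule.coe_mem _
  obtain ⟨y, hy⟩ := LinearMap.mem_range.mp hlR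
  exact ⟨y, congrArg WithLp.ofLp hy⟩

/-- quadratic form of the bordered block matrix -/
lemma block_form (P : Matrix (Fin k) (Fin k) ℝ) (l : Fin k → ℝ) (r : ℝ)
    (Y : Fin k ⊕ Fin 1 → ℝ) :
    Y ⬝ᵥ (Matrix.fromBlocks P (Matrix.of fun i (_ : Fin 1) => l i)
      (Matrix.of fun (_ : Fin 1) j => l j) (Matrix.of fun (_ _ : Fin 1) => r)) *ᵥ Y
    = (Y ∘ Sum.inl) ⬝ᵥ P *ᵥ (Y ∘ Sum.inl) + 2 * (Y (Sum.inr 0)) * (l ⬝ᵥ (Y ∘ Sum.inl))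
      + (Y (Sum.inr 0)) ^ 2 * r := by
  rw [fromBlocks_mulVec, dot_sum_elim]
  have h1 : (Matrix.of fun i (_ : Fin 1) => l i) *ᵥ (Y ∘ Sum.inr) = (Y (Sum.inr 0)) • l := by
    funext i
    simp [Matrix.mulVec, dotProduct, Fin.sum_univ_one, mul_comm]
  have h2 : (Matrix.of fun (_ : Fin 1) j => l j) *ᵥ (Y ∘ Sum.inl)
      = fun _ => l ⬝ᵥ (Y ∘ Sum.inl) := by
    funext s; rfl
  have h3 : (Matrix.of fun (_ _ : Fin 1) => r) *ᵥ (Y ∘ Sum.inr)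
      = fun _ => r * Y (Sum.inr 0) := by
    funext s
    simp [Matrix.mulVec, dotProduct, Fin.sum_univ_one]
  rw [h1, h2, h3]
  simp only [dotProduct_add, dotProduct_smul, smul_eq_mul]
  have h4 : (Y ∘ Sum.inr) ⬝ᵥ (fun _ => l ⬝ᵥ (Y ∘ Sum.inl)) = Y (Sum.inr 0) * (l ⬝ᵥ (Y ∘ Sum.inl)) := by
    simp [dotProduct, Fin.sum_univ_one]
  have h5 : (Y ∘ Sum.inr) ⬝ᵥ (fun _ => r * Y (Sum.inr 0)) = Y (Sum.inr 0) * (r * Y (Sum.inr 0)) := by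
    simp [dotProduct, Fin.sum_univ_one]
  rw [h4, h5, dotProduct_comm (Y ∘ Sum.inl) l]
  ring

lemma block_herm {P : Matrix (Fin k) (Fin k) ℝ} (hP : Pᵀ = P) (l : Fin k → ℝ) (r : ℝ) :
    (Matrix.fromBlocks P (Matrix.of fun i (_ : Fin 1) => l i)
      (Matrix.of fun (_ : Fin 1) j => l j) (Matrix.of fun (_ _ : Fin 1) => r)).IsHermitian := by
  rw [Matrix.IsHermitian, conjTranspose_eq_transpose_of_trivial, fromBlocks_transpose]
  have h1 : (Matrix.of fun (_ : Fin 1) j => l j)ᵀ = (Matrix.of fun i (_ : Fin 1) => l i) := by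
    ext i j; simp
  have h2 : (Matrix.of fun i (_ : Fin 1) => l i)ᵀ = (Matrix.of fun (_ : Fin 1) j => l j) := by
    ext i j; simp
  have h3 : (Matrix.of fun (_ _ : Fin 1) => r)ᵀ = (Matrix.of fun (_ _ : Fin 1) => r) := by
    ext i j; simp
  rw [hP, h1, h2, h3]

/-- a matrix whose restriction to a hyperplane-complementing situation is nonneg has
at most one negative eigenvalue -/
lemma neg_count_le_one {A : Matrix (Fin n) (Fin n) ℝ} (hA : A.IsHermitian)
    {b : Fin n → ℝ} (hgood : ∀ w : Fin n → ℝ, b ⬝ᵥ w = 0 → 0 ≤ w ⬝ᵥ A *ᵥ w) :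
    (Finset.univ.filter fun i => hA.eigenvalues i < 0).card ≤ 1 := by
  classical
  by_contra hc
  push_neg at hc
  obtain ⟨i, hi, j, hj, hij⟩ := Finset.one_lt_card.mp hc
  simp only [Finset.mem_filter, Finset.mem_univ, true_and] at hi hj
  have hlami : hA.eigenvalues i < 0 := hi
  have hlamj : hA.eigenvalues j < 0 := hj
  set ei : Fin n → ℝ := ⇑(hA.eigenvectorBasis i) with hei
  set ej : Fin n → ℝ := ⇑(hA.eigenvectorBasis j) with hej
  have horth := hA.eigenvectorBasis.orthonormal
  rw [orthonormal_iff_ite] at horth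
  have hdot : ∀ i' j' : Fin n, (⇑(hA.eigenvectorBasis i') : Fin n → ℝ) ⬝ᵥ ⇑(hA.eigenvectorBasis j')
      = if i' = j' then 1 else 0 := by
    intro i' j'
    have := horth i' j'
    simpa [PiLp.inner_apply, RCLike.inner_apply, dotProduct, mul_comm] using this
  have hmuli : A *ᵥ ei = hA.eigenvalues i • ei := hA.mulVec_eigenvectorBasis i
  have hmulj : A *ᵥ ej = hA.eigenvalues j • ej := hA.mulVec_eigenvectorBasis j
  have hdii : ei ⬝ᵥ ei = 1 := by rw [hei]; simpa using hdot i i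
  have hdjj : ej ⬝ᵥ ej = 1 := by rw [hej]; simpa using hdot j j
  have hdij : ei ⬝ᵥ ej = 0 := by rw [hei, hej]; simpa [hij] using hdot i j
  have hdji : ej ⬝ᵥ ei = 0 := by rw [hei, hej]; simpa [hij.symm] using hdot j i
  set α := b ⬝ᵥ ei with hα
  set β := b ⬝ᵥ ej with hβ
  set w := β • ei - α • ej with hw
  have hbw : b ⬝ᵥ w = 0 := by
    rw [hw]
    simp only [dotProduct_sub, dotProduct_smul, smul_eq_mul, ← hα, ← hβ]
    ring
  have hwAw : w ⬝ᵥ A *ᵥ w = β ^ 2 * hA.eigenvalues i + α ^ 2 * hA.eigenvalues j := by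
    rw [hw]
    simp only [mulVec_sub, Matrix.mulVec_smul, hmuli, hmulj, dotProduct_sub, sub_dotProduct,
      dotProduct_smul, smul_dotProduct, smul_eq_mul, hdii, hdjj, hdij, hdji]
    ring
  have hge := hgood w hbw
  rw [hwAw] at hge
  by_cases hα0 : α = 0
  · have hge2 := hgood ei (by rw [← hα]; exact hα0)
    have : ei ⬝ᵥ A *ᵥ ei = hA.eigenvalues i := by
      rw [hmuli, dotProduct_smul, smul_eq_mul, hdii]; ring
    rw [this] at hge2
    linarith
  · have h1 : 0 < α ^ 2 := lt_of_le_of_ne (sq_nonneg _) (Ne.symm (pow_ne_zero 2 hα0))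
    nlinarith [sq_nonneg β]
end bzero
section linearcase
variable {n k : ℕ}

lemma expV {A : Matrix (Fin n) (Fin n) ℝ} (hAT : Aᵀ = A) (a : Fin n → ℝ) (c : ℝ)
    (V : Matrix (Fin n) (Fin k) ℝ) (x₀ : Fin n → ℝ) (y : Fin k → ℝ) :
    qfun A a c (x₀ + V *ᵥ y) = y ⬝ᵥ (Vᵀ * A * V) *ᵥ y
      + 2 * ((Vᵀ *ᵥ (A *ᵥ x₀ + a)) ⬝ᵥ y) + qfun A a c x₀ := by
  have h := qfun_expand hAT a c x₀ (V *ᵥ y) 1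
  rw [show x₀ + (1:ℝ) • (V *ᵥ y) = x₀ + V *ᵥ y by module] at h
  rw [h]
  have h1 : (Vᵀ *ᵥ (A *ᵥ x₀ + a)) ⬝ᵥ y = (V *ᵥ y) ⬝ᵥ A *ᵥ x₀ + a ⬝ᵥ (V *ᵥ y) := by
    rw [trans_dot, add_dotProduct, dotProduct_comm (A *ᵥ x₀) (V *ᵥ y)]
  have h2 : y ⬝ᵥ (Vᵀ * A * V) *ᵥ y = (V *ᵥ y) ⬝ᵥ A *ᵥ (V *ᵥ y) := by
    rw [← Matrix.mulVec_mulVec, ← Matrix.mulVec_mulVec, dotProduct_comm, trans_dot,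
      dotProduct_comm]
  rw [h1, h2]
  ring

lemma mulVec_P {A : Matrix (Fin n) (Fin n) ℝ} (V : Matrix (Fin n) (Fin k) ℝ)
    (z : Fin k → ℝ) : (Vᵀ * A * V) *ᵥ z = Vᵀ *ᵥ (A *ᵥ (V *ᵥ z)) := by
  rw [← Matrix.mulVec_mulVec, ← Matrix.mulVec_mulVec]

lemma quadP {A : Matrix (Fin n) (Fin n) ℝ} (V : Matrix (Fin n) (Fin k) ℝ)
    (w z : Fin k → ℝ) : w ⬝ᵥ (Vᵀ * A * V) *ᵥ z = (V *ᵥ w) ⬝ᵥ A *ᵥ (V *ᵥ z) := by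
  rw [mulVec_P, dotProduct_comm, trans_dot, dotProduct_comm]

lemma Psymm {A : Matrix (Fin n) (Fin n) ℝ} (hAT : Aᵀ = A) (V : Matrix (Fin n) (Fin k) ℝ) :
    (Vᵀ * A * V)ᵀ = Vᵀ * A * V := by
  rw [Matrix.transpose_mul, Matrix.transpose_mul, Matrix.transpose_transpose, hAT,
    Matrix.mul_assoc]

lemma linear_case {A : Matrix (Fin n) (Fin n) ℝ} (hAT : Aᵀ = A) (hPSD : A.PosSemidef)
    (a b : Fin n → ℝ) (c d : ℝ) (V : Matrix (Fin n) (Fin k) ℝ) (x₀ : Fin n → ℝ)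
    (hbb : 0 < b ⬝ᵥ b)
    (hbV : ∀ y : Fin k → ℝ, b ⬝ᵥ (V *ᵥ y) = 0)
    (hx₀ : 2 * (b ⬝ᵥ x₀) + d = 0)
    (hsurj : ∀ x : Fin n → ℝ, ∃ (y : Fin k → ℝ) (t : ℝ), x = x₀ + V *ᵥ y + t • b)
    (HonZ : ∀ y : Fin k → ℝ, 0 ≤ qfun A a c (x₀ + V *ᵥ y)) :
    ∃ μ : ℝ, ∀ x : Fin n → ℝ, 0 ≤ qfun A a c x + μ * (2 * (b ⬝ᵥ x) + d) := by
  classical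
  set P := Vᵀ * A * V with hPdef
  set l := Vᵀ *ᵥ (A *ᵥ x₀ + a) with hldef
  set p := Vᵀ *ᵥ (A *ᵥ b) with hpdef
  set β := b ⬝ᵥ A *ᵥ b with hβdef
  set lt := b ⬝ᵥ A *ᵥ x₀ + a ⬝ᵥ b with hltdef
  set r := qfun A a c x₀ with hrdef
  have hPpsd : P.PosSemidef := by
    refine Matrix.PosSemidef.of_dotProduct_mulVec_nonneg ?_ ?_
    · rw [Matrix.IsHermitian, conjTranspose_eq_transpose_of_trivial]
      exact Psymm hAT V
    · intro z
      rw [show star z = z from funext fun i => star_trivial _, quadP]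
      exact psd_quad hPSD _
  have EXP2 : ∀ (y : Fin k → ℝ) (t : ℝ), qfun A a c (x₀ + V *ᵥ y + t • b)
      = y ⬝ᵥ P *ᵥ y + 2 * (l ⬝ᵥ y) + r + 2 * t * (p ⬝ᵥ y) + 2 * lt * t + t ^ 2 * β := by
    intro y t
    rw [qfun_expand hAT a c (x₀ + V *ᵥ y) b t, expV hAT a c V x₀ y]
    have hby : b ⬝ᵥ A *ᵥ (V *ᵥ y) = p ⬝ᵥ y := by
      rw [dot_symm hAT b (V *ᵥ y), dotProduct_comm, ← trans_dot]
    have h3 : b ⬝ᵥ A *ᵥ (x₀ + V *ᵥ y) + a ⬝ᵥ b = lt + p ⬝ᵥ y := by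
      rw [mulVec_add, dotProduct_add, hby, hltdef]; ring
    rw [h3, hβdef]
    ring
  have hker_l : ∀ u, P *ᵥ u = 0 → (-l) ⬝ᵥ u = 0 := by
    intro u hu
    have hlin : ∀ s : ℝ, 0 ≤ (2 * (l ⬝ᵥ u)) * s + r := by
      intro s
      have h2 := HonZ (s • u)
      rw [expV hAT a c V x₀ (s • u)] at h2
      rw [Matrix.mulVec_smul, show (Vᵀ * A * V) *ᵥ u = 0 from hu, smul_zero,
        dotProduct_zero, dotProduct_smul, smul_eq_mul] at h2
      linarith
    have := lin_nonneg_slope hlin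
    rw [neg_dotProduct]
    linarith
  have hker_p : ∀ u, P *ᵥ u = 0 → (-p) ⬝ᵥ u = 0 := by
    intro u hu
    have hq0 : (V *ᵥ u) ⬝ᵥ A *ᵥ (V *ᵥ u) = 0 := by
      rw [← quadP, show (Vᵀ * A * V) *ᵥ u = 0 from hu, dotProduct_zero]
    have hAVu : A *ᵥ (V *ᵥ u) = 0 := psd_zero hPSD _ hq0
    have hpu : p ⬝ᵥ u = 0 := by
      rw [hpdef, trans_dot, dotProduct_comm, dot_symm hAT (V *ᵥ u) b, hAVu, dotProduct_zero]
    rw [neg_dotProduct, hpu, neg_zero]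
  obtain ⟨y₀, hy₀⟩ := range_solve hPpsd (-l) hker_l
  obtain ⟨y₁, hy₁⟩ := range_solve hPpsd (-p) hker_p
  have hcross : l ⬝ᵥ y₁ = p ⬝ᵥ y₀ := by
    have h1 : l = -(P *ᵥ y₀) := by rw [hy₀, neg_neg]
    rw [h1, neg_dotProduct, dotProduct_comm, dot_symm (Psymm hAT V) y₁ y₀, hy₁,
      dotProduct_neg, neg_neg, dotProduct_comm]
  have hdelta : 0 ≤ l ⬝ᵥ y₀ + r := by
    have h2 := HonZ y₀
    rw [expV hAT a c V x₀ y₀] at h2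
    have h3 : y₀ ⬝ᵥ (Vᵀ * A * V) *ᵥ y₀ = -(l ⬝ᵥ y₀) := by
      rw [show (Vᵀ * A * V) *ᵥ y₀ = -l from hy₀, dotProduct_neg, dotProduct_comm]
    rw [h3] at h2
    linarith
  have halpha : 0 ≤ β + p ⬝ᵥ y₁ := by
    have h1 := psd_quad hPSD (V *ᵥ y₁ + b)
    simp only [mulVec_add, dotProduct_add, add_dotProduct] at h1
    have e1 : (V *ᵥ y₁) ⬝ᵥ A *ᵥ (V *ᵥ y₁) = -(p ⬝ᵥ y₁) := by
      rw [← quadP, show (Vᵀ * A * V) *ᵥ y₁ = -p from hy₁, dotProduct_neg, dotProduct_comm]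
    have e2 : (V *ᵥ y₁) ⬝ᵥ A *ᵥ b = p ⬝ᵥ y₁ := by
      rw [dot_symm hAT (V *ᵥ y₁) b, dot_symm hAT b (V *ᵥ y₁), dotProduct_comm, ← trans_dot,
        ← hpdef]
    have e3 : b ⬝ᵥ A *ᵥ (V *ᵥ y₁) = p ⬝ᵥ y₁ := by
      rw [dot_symm hAT b (V *ᵥ y₁), dotProduct_comm, ← trans_dot, ← hpdef]
    rw [e1, e2, e3, ← hβdef] at h1
    linarith
  refine ⟨-(p ⬝ᵥ y₀ + lt) / (b ⬝ᵥ b), fun x => ?_⟩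
  obtain ⟨y, t, rfl⟩ := hsurj x
  have hh : 2 * (b ⬝ᵥ (x₀ + V *ᵥ y + t • b)) + d = 2 * t * (b ⬝ᵥ b) := by
    simp only [dotProduct_add, dotProduct_smul, smul_eq_mul, hbV]
    linarith [hx₀]
  rw [EXP2 y t, hh]
  have hμ : -(p ⬝ᵥ y₀ + lt) / (b ⬝ᵥ b) * (2 * t * (b ⬝ᵥ b)) = -2 * (p ⬝ᵥ y₀ + lt) * t := by
    field_simp
  rw [hμ]
  -- the completion-of-squares certificate
  have c1 : y ⬝ᵥ P *ᵥ (y₀ + t • y₁) = -(l ⬝ᵥ y) - t * (p ⬝ᵥ y) := by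
    rw [mulVec_add, Matrix.mulVec_smul, hy₀, hy₁, dotProduct_add, dotProduct_smul,
      dotProduct_neg, dotProduct_neg, smul_eq_mul, dotProduct_comm y l, dotProduct_comm y p]
    ring
  have c2 : (y₀ + t • y₁) ⬝ᵥ P *ᵥ y = -(l ⬝ᵥ y) - t * (p ⬝ᵥ y) := by
    rw [dot_symm (Psymm hAT V) (y₀ + t • y₁) y]
    exact c1
  have c3 : (y₀ + t • y₁) ⬝ᵥ P *ᵥ (y₀ + t • y₁)
      = -(l ⬝ᵥ y₀) - 2 * t * (p ⬝ᵥ y₀) - t ^ 2 * (p ⬝ᵥ y₁) := by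
    rw [mulVec_add, Matrix.mulVec_smul, hy₀, hy₁, dotProduct_add, add_dotProduct,
      add_dotProduct, dotProduct_smul, smul_dotProduct, smul_dotProduct, dotProduct_smul,
      dotProduct_neg, dotProduct_neg, dotProduct_neg, dotProduct_neg, smul_eq_mul,
      smul_eq_mul, smul_eq_mul, smul_eq_mul, dotProduct_comm y₀ l, dotProduct_comm y₀ p,
      dotProduct_comm y₁ l, dotProduct_comm y₁ p, hcross]
    ring
  have c4 : (y - (y₀ + t • y₁)) ⬝ᵥ P *ᵥ (y - (y₀ + t • y₁))
      = y ⬝ᵥ P *ᵥ y + 2 * (l ⬝ᵥ y) + 2 * t * (p ⬝ᵥ y)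
        - (l ⬝ᵥ y₀) - 2 * t * (p ⬝ᵥ y₀) - t ^ 2 * (p ⬝ᵥ y₁) := by
    rw [Matrix.mulVec_sub, dotProduct_sub, sub_dotProduct, sub_dotProduct, c1, c2, c3]
    ring
  have hwpos : 0 ≤ (y - (y₀ + t • y₁)) ⬝ᵥ P *ᵥ (y - (y₀ + t • y₁)) := by
    rw [quadP]
    exact psd_quad hPSD _
  have hαt : 0 ≤ (β + p ⬝ᵥ y₁) * t ^ 2 := mul_nonneg halpha (sq_nonneg t)
  rw [c4] at hwpos
  nlinarith [hwpos, hαt, hdelta]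
end linearcase
/-- The S-lemma with equality (Xia, Wang, Sheu). -/
theorem s_lemma_with_equality (n : ℕ) (hn : 0 < n)
    (A B : Matrix (Fin n) (Fin n) ℝ) (hA : A.IsHermitian) (hB : B.IsSymm)
    (a b : Fin n → ℝ) (c d : ℝ)
    (V : Matrix (Fin n) (Fin (n - 1)) ℝ)
    (hVindep : LinearIndependent ℝ (fun j : Fin (n - 1) => fun i : Fin n => V i j))
    (hVspan : (Submodule.span ℝ (Set.range fun j : Fin (n - 1) => fun i : Fin n => V i j)
      : Set (Fin n → ℝ)) = {x : Fin n → ℝ | b ⬝ᵥ x = 0})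
    (hSlater : ∃ x' x'' : Fin n → ℝ, qfun B b d x' < 0 ∧ 0 < qfun B b d x'')
    (hexc : ¬ (((Finset.univ.filter fun i => hA.eigenvalues i < 0).card = 1) ∧ B = 0 ∧ b ≠ 0 ∧
      (Matrix.fromBlocks (Vᵀ * A * V)
        (Matrix.of fun i (_ : Fin 1) =>
          (Vᵀ *ᵥ (A *ᵥ (-(d / (2 * (b ⬝ᵥ b))) • b) + a)) i)
        (Matrix.of fun (_ : Fin 1) j =>
          (Vᵀ *ᵥ (A *ᵥ (-(d / (2 * (b ⬝ᵥ b))) • b) + a)) j)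
        (Matrix.of fun (_ _ : Fin 1) =>
          qfun A a c (-(d / (2 * (b ⬝ᵥ b))) • b))).PosSemidef)) :
    (¬ ∃ x : Fin n → ℝ, qfun A a c x < 0 ∧ qfun B b d x = 0) ↔
      (∃ μ : ℝ, ∀ x : Fin n → ℝ, qfun A a c x + μ * qfun B b d x ≥ 0) := by
  classical
  have hAT : Aᵀ = A := by
    rw [← conjTranspose_eq_transpose_of_trivial]; exact hA
  have hBT : Bᵀ = B := hB
  obtain ⟨x', x'', hx', hx''⟩ := hSlater
  constructor
  · intro NS
    have NS' : ∀ z, qfun B b d z = 0 → 0 ≤ qfun A a c z := by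
      intro z hz
      by_contra hneg
      push_neg at hneg
      exact NS ⟨z, hneg, hz⟩
    by_cases hB0 : B = 0
    · -- linear constraint branch
      have hq0 : ∀ x : Fin n → ℝ, qfun B b d x = 2 * (b ⬝ᵥ x) + d := by
        intro x; rw [hB0]; simp [qfun]
      have hbne : b ≠ 0 := by
        intro h
        rw [hq0 x'] at hx'; rw [hq0 x''] at hx''
        rw [h] at hx' hx''
        simp at hx' hx''
        linarith
      have hbbnn : 0 ≤ b ⬝ᵥ b := Finset.sum_nonneg fun i _ => mul_self_nonneg (b i)
      have hbb : 0 < b ⬝ᵥ b :=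
        lt_of_le_of_ne hbbnn (Ne.symm (fun h => hbne (dotProduct_self_eq_zero.mp h)))
      set x₀ : Fin n → ℝ := -(d / (2 * (b ⬝ᵥ b))) • b with hx₀def
      have hbx₀ : b ⬝ᵥ x₀ = -(d / 2) := by
        rw [hx₀def, dotProduct_smul, smul_eq_mul]
        field_simp
      have hx₀Z : 2 * (b ⬝ᵥ x₀) + d = 0 := by rw [hbx₀]; ring
      have hcol : ∀ j, b ⬝ᵥ (fun i => V i j) = 0 := by
        intro j
        have hmem : (fun i => V i j) ∈ (Submodule.span ℝ
            (Set.range fun j : Fin (n - 1) => fun i : Fin n => V i j) : Set (Fin n → ℝ)) :=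
          Submodule.subset_span ⟨j, rfl⟩
        rw [hVspan] at hmem
        exact hmem
      have hbV : ∀ y : Fin (n - 1) → ℝ, b ⬝ᵥ (V *ᵥ y) = 0 := by
        intro y
        rw [dotProduct_mulVec]
        have hz : b ᵥ* V = 0 := by funext j; exact hcol j
        rw [hz, zero_dotProduct]
      have hmemZ : ∀ y, qfun B b d (x₀ + V *ᵥ y) = 0 := by
        intro y
        rw [hq0, dotProduct_add, hbx₀, hbV]
        ring
      have HonZ : ∀ y, 0 ≤ qfun A a c (x₀ + V *ᵥ y) := fun y => NS' _ (hmemZ y)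
      have hVAV : ∀ y : Fin (n - 1) → ℝ, 0 ≤ y ⬝ᵥ (Vᵀ * A * V) *ᵥ y := by
        intro y
        refine quad_nonneg_leading (β := 2 * ((Vᵀ *ᵥ (A *ᵥ x₀ + a)) ⬝ᵥ y))
          (γ := qfun A a c x₀) fun s => ?_
        have h2 := HonZ (s • y)
        rw [expV hAT a c V x₀ (s • y)] at h2
        simp only [Matrix.mulVec_smul, dotProduct_smul, smul_dotProduct, smul_eq_mul] at h2
        nlinarith [h2]
      have hPSDblk : (Matrix.fromBlocks (Vᵀ * A * V)
          (Matrix.of fun i (_ : Fin 1) => (Vᵀ *ᵥ (A *ᵥ x₀ + a)) i)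
          (Matrix.of fun (_ : Fin 1) j => (Vᵀ *ᵥ (A *ᵥ x₀ + a)) j)
          (Matrix.of fun (_ _ : Fin 1) => qfun A a c x₀)).PosSemidef := by
        refine Matrix.PosSemidef.of_dotProduct_mulVec_nonneg ?_ ?_
        · exact block_herm (Psymm hAT V) _ _
        · intro Y
          rw [show star Y = Y from funext fun i => star_trivial _, block_form]
          by_cases ht : Y (Sum.inr 0) = 0
          · rw [ht]
            simpa using hVAV (Y ∘ Sum.inl)
          · have key : (Y ∘ Sum.inl) ⬝ᵥ (Vᵀ * A * V) *ᵥ (Y ∘ Sum.inl)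
                + 2 * (Y (Sum.inr 0)) * ((Vᵀ *ᵥ (A *ᵥ x₀ + a)) ⬝ᵥ (Y ∘ Sum.inl))
                + (Y (Sum.inr 0)) ^ 2 * qfun A a c x₀
                = (Y (Sum.inr 0)) ^ 2 * qfun A a c
                    (x₀ + V *ᵥ ((1 / Y (Sum.inr 0)) • (Y ∘ Sum.inl))) := by
              rw [expV hAT a c V x₀ _]
              simp only [Matrix.mulVec_smul, dotProduct_smul, smul_dotProduct, smul_eq_mul]
              field_simp
            rw [key]
            exact mul_nonneg (sq_nonneg _) (HonZ _)
      have hcard1 : (Finset.univ.filter fun i => hA.eigenvalues i < 0).card ≠ 1 :=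
        fun h1 => hexc ⟨h1, hB0, hbne, hPSDblk⟩
      have hgood : ∀ w : Fin n → ℝ, b ⬝ᵥ w = 0 → 0 ≤ w ⬝ᵥ A *ᵥ w := by
        intro w hw
        have hmem : w ∈ (Submodule.span ℝ
            (Set.range fun j : Fin (n - 1) => fun i : Fin n => V i j) : Set (Fin n → ℝ)) := by
          rw [hVspan]; exact hw
        obtain ⟨yc, hyc⟩ := (Submodule.mem_span_range_iff_exists_fun ℝ).mp hmem
        have hwV : V *ᵥ yc = w := by
          rw [← hyc]
          funext i0
          simp [Matrix.mulVec, dotProduct, Finset.sum_apply, mul_comm]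
        rw [← hwV, ← quadP]
        exact hVAV yc
      have hle1 := neg_count_le_one hA hgood
      have hcard0 : (Finset.univ.filter fun i => hA.eigenvalues i < 0).card = 0 := by omega
      have hApsd : A.PosSemidef := by
        refine (Matrix.IsHermitian.posSemidef_iff_eigenvalues_nonneg hA).mpr fun i => ?_
        by_contra hlt
        push_neg at hlt
        have hmemi : i ∈ Finset.univ.filter fun i => hA.eigenvalues i < 0 :=
          Finset.mem_filter.mpr ⟨Finset.mem_univ _, hlt⟩
        rw [Finset.card_eq_zero] at hcard0
        rw [hcard0] at hmemi
        exact absurd hmemi (Finset.notMem_empty _)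
      have hsurj : ∀ x : Fin n → ℝ, ∃ (y : Fin (n - 1) → ℝ) (t : ℝ),
          x = x₀ + V *ᵥ y + t • b := by
        intro x
        set t := (b ⬝ᵥ x - b ⬝ᵥ x₀) / (b ⬝ᵥ b) with htdef
        have hw : b ⬝ᵥ (x - x₀ - t • b) = 0 := by
          rw [dotProduct_sub, dotProduct_sub, htdef, hbx₀]
          simp only [dotProduct_smul, smul_eq_mul]
          field_simp
          ring
        have hmem : (x - x₀ - t • b) ∈ (Submodule.span ℝ
            (Set.range fun j : Fin (n - 1) => fun i : Fin n => V i j) : Set (Fin n → ℝ)) := by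
          rw [hVspan]; exact hw
        obtain ⟨yc, hyc⟩ := (Submodule.mem_span_range_iff_exists_fun ℝ).mp hmem
        have hwV : V *ᵥ yc = x - x₀ - t • b := by
          rw [← hyc]
          funext i0
          simp [Matrix.mulVec, dotProduct, Finset.sum_apply, mul_comm]
        refine ⟨yc, t, ?_⟩
        rw [hwV]
        module
      obtain ⟨μ, hμ⟩ := linear_case hAT hApsd a b c d V x₀ hbb hbV hx₀Z hsurj HonZ
      refine ⟨μ, fun x => ?_⟩
      rw [ge_iff_le, hq0 x]
      exact hμ x
    · -- B ≠ 0 branch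
      set Mp := {μ : ℝ | ∀ x, 0 < qfun B b d x → 0 ≤ qfun A a c x + μ * qfun B b d x} with hMp
      set Mm := {μ : ℝ | ∀ x, qfun B b d x < 0 → 0 ≤ qfun A a c x + μ * qfun B b d x} with hMm
      have hunion : ∀ μ : ℝ, μ ∈ Mp ∨ μ ∈ Mm := by
        intro μ
        by_contra hcon
        push_neg at hcon
        obtain ⟨hcp, hcm⟩ := hcon
        rw [hMp, Set.mem_setOf_eq] at hcp
        rw [hMm, Set.mem_setOf_eq] at hcm
        push_neg at hcp hcm
        obtain ⟨x, hx1, hx2⟩ := hcp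
        obtain ⟨y, hy1, hy2⟩ := hcm
        refine main_engine (M := A + μ • B) (B := B)
          (by rw [Matrix.transpose_add, Matrix.transpose_smul, hAT, hBT]) hBT hB0
          (a + μ • b) b (c + μ * d) d x y ?_ ?_ ?_ hx1 hy1
        · intro z hz
          rw [← qfun_combo]
          have h3 := NS' z hz
          rw [hz, mul_zero, add_zero]
          exact h3
        · rw [← qfun_combo]; linarith
        · rw [← qfun_combo]; linarith
      have hMpclosed : IsClosed Mp := by
        have hrw : Mp = ⋂ x : Fin n → ℝ,
            {μ : ℝ | 0 < qfun B b d x → 0 ≤ qfun A a c x + μ * qfun B b d x} := by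
          ext μ; simp [hMp, Set.mem_iInter, Set.mem_setOf_eq]
        rw [hrw]
        refine isClosed_iInter fun x => ?_
        by_cases hx : 0 < qfun B b d x
        · have h5 : {μ : ℝ | 0 < qfun B b d x → 0 ≤ qfun A a c x + μ * qfun B b d x}
              = {μ : ℝ | 0 ≤ qfun A a c x + μ * qfun B b d x} := by
            ext μ; simp [hx]
          rw [h5]
          exact isClosed_le continuous_const
            (continuous_const.add (continuous_id.mul continuous_const))
        · have h5 : {μ : ℝ | 0 < qfun B b d x → 0 ≤ qfun A a c x + μ * qfun B b d x}
              = Set.univ := by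
            ext μ; simp [hx]
          rw [h5]; exact isClosed_univ
      have hMmclosed : IsClosed Mm := by
        have hrw : Mm = ⋂ x : Fin n → ℝ,
            {μ : ℝ | qfun B b d x < 0 → 0 ≤ qfun A a c x + μ * qfun B b d x} := by
          ext μ; simp [hMm, Set.mem_iInter, Set.mem_setOf_eq]
        rw [hrw]
        refine isClosed_iInter fun x => ?_
        by_cases hx : qfun B b d x < 0
        · have h5 : {μ : ℝ | qfun B b d x < 0 → 0 ≤ qfun A a c x + μ * qfun B b d x}
              = {μ : ℝ | 0 ≤ qfun A a c x + μ * qfun B b d x} := by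
            ext μ; simp [hx]
          rw [h5]
          exact isClosed_le continuous_const
            (continuous_const.add (continuous_id.mul continuous_const))
        · have h5 : {μ : ℝ | qfun B b d x < 0 → 0 ≤ qfun A a c x + μ * qfun B b d x}
              = Set.univ := by
            ext μ; simp [hx]
          rw [h5]; exact isClosed_univ
      set μm := (-1 - qfun A a c x') / qfun B b d x' with hμmdef
      have hμmval : qfun A a c x' + μm * qfun B b d x' = -1 := by
        have h6 : μm * qfun B b d x' = -1 - qfun A a c x' :=
          div_mul_cancel₀ _ (ne_of_lt hx')
        linarith
      have hμm_not : μm ∉ Mm := by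
        intro hmem
        rw [hMm, Set.mem_setOf_eq] at hmem
        have := hmem x' hx'
        linarith
      have hMpne : Mp.Nonempty := ⟨μm, (hunion μm).resolve_right hμm_not⟩
      set μp := (-1 - qfun A a c x'') / qfun B b d x'' with hμpdef
      have hμpval : qfun A a c x'' + μp * qfun B b d x'' = -1 := by
        have h6 : μp * qfun B b d x'' = -1 - qfun A a c x'' :=
          div_mul_cancel₀ _ (ne_of_gt hx'')
        linarith
      have hμp_not : μp ∉ Mp := by
        intro hmem
        rw [hMp, Set.mem_setOf_eq] at hmem
        have := hmem x'' hx''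
        linarith
      have hMmne : Mm.Nonempty := ⟨μp, (hunion μp).resolve_left hμp_not⟩
      by_cases hint : (Mp ∩ Mm).Nonempty
      · obtain ⟨μ, hμ1, hμ2⟩ := hint
        rw [hMp, Set.mem_setOf_eq] at hμ1
        rw [hMm, Set.mem_setOf_eq] at hμ2
        refine ⟨μ, fun x => ?_⟩
        rw [ge_iff_le]
        rcases lt_trichotomy (qfun B b d x) 0 with h | h | h
        · exact hμ2 x h
        · rw [h, mul_zero, add_zero]
          exact NS' x h
        · exact hμ1 x h
      · exfalso
        rw [Set.not_nonempty_iff_eq_empty] at hint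
        have hcompl : Mp = Mmᶜ := by
          ext μ
          constructor
          · intro hμ hm
            exact Set.eq_empty_iff_forall_notMem.mp hint μ ⟨hμ, hm⟩
          · intro hμ
            exact (hunion μ).resolve_right hμ
        have hopen : IsOpen Mp := by
          rw [hcompl]
          exact hMmclosed.isOpen_compl
        rcases isClopen_iff.mp ⟨hMpclosed, hopen⟩ with h | h
        · rw [h] at hMpne
          exact Set.not_nonempty_empty hMpne
        · rw [h] at hμp_not
          exact hμp_not (Set.mem_univ _)
  · rintro ⟨μ, hμ⟩ ⟨x, hfx, hhx⟩
    have h7 := hμ x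
    rw [hhx, mul_zero, add_zero] at h7
    linarith
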